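/- Every finite family 𝔉 of frames in general position with clique number ω(𝔉) ≤ k can be partitioned into at most k non-crossing subfamilies. -/

import Mathlib

open Set

/-- An axis-aligned rectangle `[l, r] × [b, t]` with `l < r` and `b < t`. -/
structure Rect where
  l : ℝ
  r : ℝ
  b : ℝ
  t : ℝ
  hlr : l < r
  hbt : b < t

noncomputable instance : DecidableEq Rect := Classical.decEq _

/-- The filling rectangle, as a subset of the plane. -/
def Rect.toSet (R : Rect) : Set (ℝ × ℝ) := Set.Icc R.l R.r ×ˢ Set.Icc R.b R.t

/-- The frame: the boundary (topological frontier) of the filling rectangle. -/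
def Rect.frame (R : Rect) : Set (ℝ × ℝ) := frontier R.toSet

/-- A family of frames is in general position. -/
def GenPos (𝔉 : Finset Rect) : Prop :=
  ∀ F ∈ 𝔉, ∀ F' ∈ 𝔉, F ≠ F' →
    [F.l, F.r, F'.l, F'.r].Pairwise (· ≠ ·) ∧
    [F.b, F.t, F'.b, F'.t].Pairwise (· ≠ ·)

/-- The intersection graph of a family of frames. -/
def frameGraph (𝔉 : Finset Rect) : SimpleGraph {F : Rect // F ∈ 𝔉} where
  Adj F F' := F ≠ F' ∧ (F.1.frame ∩ F'.1.frame).Nonempty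
  symm := by
    constructor
    intro a b h
    exact ⟨h.1.symm, by rw [Set.inter_comm]; exact h.2⟩
  loopless := by constructor; intro a h; exact h.1 rfl

/-- The intersection of frames `F` and `F'` is rightward-directed. -/
def RightDir (F F' : Rect) : Prop :=
  F.l < F'.l ∧ F'.l < F.r ∧ F.r < F'.r ∧ F.b < F'.b ∧ F'.b < F'.t ∧ F'.t < F.t

/-- The intersection of frames `F` and `F'` is leftward-directed. -/
def LeftDir (F F' : Rect) : Prop :=
  F'.l < F.l ∧ F.l < F'.r ∧ F'.r < F.r ∧ F.b < F'.b ∧ F'.b < F'.t ∧ F'.t < F.t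

/-- The intersection of frames `F` and `F'` is upward-directed. -/
def UpDir (F F' : Rect) : Prop :=
  F.b < F'.b ∧ F'.b < F.t ∧ F.t < F'.t ∧ F.l < F'.l ∧ F'.l < F'.r ∧ F'.r < F.r

/-- The intersection of frames `F` and `F'` is downward-directed. -/
def DownDir (F F' : Rect) : Prop :=
  F'.b < F.b ∧ F.b < F'.t ∧ F'.t < F.t ∧ F.l < F'.l ∧ F'.l < F'.r ∧ F'.r < F.r

/-- Any two intersecting frames of the family satisfy `P` (in one of the two orders). -/
def IntersectingPairsSatisfy (𝔉 : Finset Rect) (P : Rect → Rect → Prop) : Prop :=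
  ∀ F ∈ 𝔉, ∀ F' ∈ 𝔉, F ≠ F' → (F.frame ∩ F'.frame).Nonempty → P F F' ∨ P F' F

def IsRightwardDirected (𝔉 : Finset Rect) : Prop := IntersectingPairsSatisfy 𝔉 RightDir

/-- A directed family of frames. -/
def IsDirectedFamily (𝔉 : Finset Rect) : Prop :=
  IntersectingPairsSatisfy 𝔉 RightDir ∨ IntersectingPairsSatisfy 𝔉 LeftDir ∨
    IntersectingPairsSatisfy 𝔉 UpDir ∨ IntersectingPairsSatisfy 𝔉 DownDir

/-- `F` is enclosed by `F'`. -/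
def Enclosed (F F' : Rect) : Prop :=
  F'.l < F.l ∧ F.r < F'.r ∧ F'.b < F.b ∧ F.t < F'.t

/-- A clean family of frames. -/
def Clean (𝔉 : Finset Rect) : Prop :=
  ¬ ∃ F₁ ∈ 𝔉, ∃ F₂ ∈ 𝔉, ∃ F₃ ∈ 𝔉, F₁ ≠ F₂ ∧
    (Rect.frame F₁ ∩ Rect.frame F₂).Nonempty ∧ Enclosed F₃ F₁ ∧ Enclosed F₃ F₂

/-- The overlap graph of a family of rectangles: two rectangles are adjacent if they
intersect but neither is a subset of the other. -/
def overlapGraph (𝔉 : Finset Rect) : SimpleGraph {R : Rect // R ∈ 𝔉} where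
  Adj R S := (R.1.toSet ∩ S.1.toSet).Nonempty ∧ ¬ R.1.toSet ⊆ S.1.toSet ∧ ¬ S.1.toSet ⊆ R.1.toSet
  symm := by
    constructor
    intro a b h
    exact ⟨by rw [Set.inter_comm]; exact h.1, h.2.2, h.2.1⟩
  loopless := by constructor; intro a h; exact h.2.1 subset_rfl

/-- Two frames cross. -/
def Cross (F₁ F₂ : Rect) : Prop :=
  (F₂.l < F₁.l ∧ F₁.r < F₂.r ∧ F₁.b < F₂.b ∧ F₂.t < F₁.t) ∨
  (F₁.l < F₂.l ∧ F₂.r < F₁.r ∧ F₂.b < F₁.b ∧ F₁.t < F₂.t)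

/-- A non-crossing family of frames. -/
def NonCrossing (𝔉 : Finset Rect) : Prop :=
  ∀ F₁ ∈ 𝔉, ∀ F₂ ∈ 𝔉, ¬ Cross F₁ F₂

open scoped Classical

/-- `F` is horizontally inside `G` and vertically sticks out: the "crossing order". -/
def LtR (F G : Rect) : Prop := G.l < F.l ∧ F.r < G.r ∧ F.b < G.b ∧ G.t < F.t

lemma LtR.trans' {F G H : Rect} (h1 : LtR F G) (h2 : LtR G H) : LtR F H :=
  ⟨h2.1.trans h1.1, h1.2.1.trans h2.2.1, h1.2.2.1.trans h2.2.2.1, h2.2.2.2.trans h1.2.2.2⟩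

lemma LtR.irrefl' (F : Rect) : ¬ LtR F F := fun h => lt_irrefl _ h.1

lemma cross_iff (F G : Rect) : Cross F G ↔ LtR F G ∨ LtR G F := Iff.rfl

lemma mem_frame_of (R : Rect) {x y : ℝ} (hx : x ∈ Set.Icc R.l R.r)
    (hy : y ∈ Set.Icc R.b R.t) (hb : x = R.l ∨ x = R.r ∨ y = R.b ∨ y = R.t) :
    (x, y) ∈ R.frame := by
  have hmem : (x, y) ∈ R.toSet := ⟨hx, hy⟩
  have hcl : IsClosed R.toSet := (isClosed_Icc).prod isClosed_Icc
  rw [Rect.frame, hcl.frontier_eq]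
  refine ⟨hmem, ?_⟩
  rw [Rect.toSet, interior_prod_eq, interior_Icc, interior_Icc]
  rintro ⟨hx', hy'⟩
  rcases hb with h | h | h | h
  · exact lt_irrefl x (h ▸ hx'.1)
  · exact lt_irrefl x (h ▸ hx'.2)
  · exact lt_irrefl y (h ▸ hy'.1)
  · exact lt_irrefl y (h ▸ hy'.2)

lemma frame_inter_of_ltR {F G : Rect} (h : LtR G F) :
    (G.frame ∩ F.frame).Nonempty := by
  refine ⟨(G.l, F.b), ?_, ?_⟩
  · exact mem_frame_of G ⟨le_refl _, G.hlr.le⟩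
      ⟨(h.2.2.1).le, (F.hbt.trans h.2.2.2).le⟩ (Or.inl rfl)
  · exact mem_frame_of F ⟨h.1.le, (G.hlr.trans h.2.1).le⟩
      ⟨le_refl _, F.hbt.le⟩ (Or.inr (Or.inr (Or.inl rfl)))

/-- The Mirsky height of `F` with respect to the crossing order within `𝔉`. -/
noncomputable def ht (𝔉 : Finset Rect) (F : Rect) : ℕ :=
  (𝔉.filter (fun G => LtR G F)).attach.sup (fun G => ht 𝔉 G.1 + 1)
termination_by (𝔉.filter (fun G => LtR G F)).card
decreasing_by
  simp_wf
  obtain ⟨hG𝔉, hGF⟩ := Finset.mem_filter.mp G.2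
  apply Finset.card_lt_card
  constructor
  · intro H hH
    obtain ⟨hH𝔉, hHG⟩ := Finset.mem_filter.mp hH
    exact Finset.mem_filter.mpr ⟨hH𝔉, hHG.trans' hGF⟩
  · intro hsub
    have := Finset.mem_filter.mp (hsub G.2)
    exact LtR.irrefl' _ this.2

lemma ht_lt_ht {𝔉 : Finset Rect} {F G : Rect} (hG : G ∈ 𝔉) (h : LtR G F) :
    ht 𝔉 G < ht 𝔉 F := by
  have hmem : G ∈ 𝔉.filter (fun G => LtR G F) := Finset.mem_filter.mpr ⟨hG, h⟩
  have : ht 𝔉 G + 1 ≤ ht 𝔉 F := by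
    conv_rhs => rw [ht]
    exact Finset.le_sup (f := fun G => ht 𝔉 G.1 + 1) (Finset.mem_attach _ ⟨G, hmem⟩)
  omega

lemma exists_chain (𝔉 : Finset Rect) : ∀ n : ℕ, ∀ F ∈ 𝔉, ht 𝔉 F = n →
    ∃ s : Finset Rect, s ⊆ 𝔉 ∧ F ∈ s ∧ s.card = n + 1 ∧
      (∀ G ∈ s, G = F ∨ LtR G F) ∧
      (∀ G ∈ s, ∀ G' ∈ s, G ≠ G' → LtR G G' ∨ LtR G' G) := by
  intro n
  induction n with
  | zero =>
    intro F hF _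
    refine ⟨{F}, by simpa using hF, Finset.mem_singleton_self F, by simp, ?_, ?_⟩
    · intro G hG; left; exact Finset.mem_singleton.mp hG
    · intro G hG G' hG' hne
      exact absurd ((Finset.mem_singleton.mp hG).trans
        (Finset.mem_singleton.mp hG').symm) hne
  | succ m ih =>
    intro F hF hht
    have hne0 : (𝔉.filter (fun G => LtR G F)).attach.Nonempty := by
      rw [Finset.attach_nonempty_iff]
      by_contra hemp
      rw [Finset.not_nonempty_iff_eq_empty] at hemp
      rw [ht, hemp] at hht
      simp at hht
    obtain ⟨G, -, hGsup⟩ := Finset.exists_mem_eq_sup (𝔉.filter (fun G => LtR G F)).attach hne0 (fun G => ht 𝔉 G.1 + 1)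
    obtain ⟨hG𝔉, hGF⟩ := Finset.mem_filter.mp G.2
    have hhtG : ht 𝔉 G.1 = m := by
      rw [ht] at hht; rw [hht] at hGsup; omega
    obtain ⟨s', hs'sub, hGs', hcard, hbelow, hpair⟩ := ih G.1 hG𝔉 hhtG
    have hFnot : F ∉ s' := by
      intro hFs'
      rcases hbelow F hFs' with heq | hlt
      · rw [← heq] at hGF; exact LtR.irrefl' F hGF
      · exact LtR.irrefl' F (hlt.trans' hGF)
    refine ⟨insert F s', ?_, Finset.mem_insert_self _ _, ?_, ?_, ?_⟩
    · intro H hH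
      rcases Finset.mem_insert.mp hH with rfl | hH'
      · exact hF
      · exact hs'sub hH'
    · rw [Finset.card_insert_of_notMem hFnot, hcard]
    · intro H hH
      rcases Finset.mem_insert.mp hH with rfl | hH'
      · exact Or.inl rfl
      · rcases hbelow H hH' with rfl | hlt
        · exact Or.inr hGF
        · exact Or.inr (hlt.trans' hGF)
    · intro H hH H' hH' hne
      rcases Finset.mem_insert.mp hH with rfl | hH1
      · rcases Finset.mem_insert.mp hH' with rfl | hH2
        · exact absurd rfl hne
        · rcases hbelow H' hH2 with heq | hlt
          · rw [heq]; exact Or.inr hGF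
          · exact Or.inr (hlt.trans' hGF)
      · rcases Finset.mem_insert.mp hH' with rfl | hH2
        · rcases hbelow H hH1 with heq | hlt
          · rw [heq]; exact Or.inl hGF
          · exact Or.inl (hlt.trans' hGF)
        · exact hpair H hH1 H' hH2 hne

lemma ht_lt_k {k : ℕ} {𝔉 : Finset Rect} (hcl : (frameGraph 𝔉).CliqueFree (k + 1))
    {F : Rect} (hF : F ∈ 𝔉) : ht 𝔉 F < k := by
  by_contra hge
  push_neg at hge
  obtain ⟨s, hsub, hFs, hcard, -, hpair⟩ := exists_chain 𝔉 (ht 𝔉 F) F hF rfl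
  set t : Finset {F : Rect // F ∈ 𝔉} := s.subtype (· ∈ 𝔉) with ht_def
  have htcard : t.card = ht 𝔉 F + 1 := by
    rw [ht_def, Finset.card_subtype, Finset.filter_true_of_mem (fun x hx => hsub hx), hcard]
  have hclique : (frameGraph 𝔉).IsNClique (ht 𝔉 F + 1) t := by
    constructor
    · intro a ha b hb hne
      have ha' : a.1 ∈ s := by simpa [ht_def, Finset.mem_subtype] using ha
      have hb' : b.1 ∈ s := by simpa [ht_def, Finset.mem_subtype] using hb
      have hne' : a.1 ≠ b.1 := fun h => hne (Subtype.ext h)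
      refine ⟨hne, ?_⟩
      rcases hpair a.1 ha' b.1 hb' hne' with h | h
      · exact frame_inter_of_ltR h
      · rw [Set.inter_comm]; exact frame_inter_of_ltR h
    · exact htcard
  have : (frameGraph 𝔉).CliqueFree (ht 𝔉 F + 1) := hcl.mono (by omega)
  exact this t hclique

/-- Every family of frames in general position with clique number at most `k` can be
partitioned into at most `k` non-crossing subfamilies. -/
theorem stmt15 (k : ℕ) (𝔉 : Finset Rect) (hgp : GenPos 𝔉)
    (hcl : (frameGraph 𝔉).CliqueFree (k + 1)) :
    ∃ c : Rect → ℕ, (∀ F ∈ 𝔉, c F < k) ∧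
      ∀ i : ℕ, NonCrossing (𝔉.filter (fun F => c F = i)) := by
  refine ⟨ht 𝔉, fun F hF => ht_lt_k hcl hF, ?_⟩
  intro i F₁ hF₁ F₂ hF₂ hcross
  obtain ⟨hF₁𝔉, hc₁⟩ := Finset.mem_filter.mp hF₁
  obtain ⟨hF₂𝔉, hc₂⟩ := Finset.mem_filter.mp hF₂
  rcases (cross_iff F₁ F₂).mp hcross with h | h
  · have := ht_lt_ht hF₁𝔉 h; omega
  · have := ht_lt_ht hF₂𝔉 h; omega
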